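/- Let s ∈ {0,1}^N be a sampling pattern with support S, m = ‖s‖₀ ones, 0 < m < N, on a connected weighted graph, and suppose S^c is nonempty. Then K_S ≥ m(1 − m/N)²/R_s − γ, where K_S = min_{v∈S^c} w_S(v), γ = max_{v'∈S^c} Σ_{v ∈ S^c \ {v'}} w_S(v), w_S(v) = Σ_{u∈S} W(u,v), and R_s = (1/m) Σ_{ℓ=2}^N ŝ(ℓ)²/μ_ℓ is the redness of s. -/

import Mathlib

open Finset Matrix

/-- Blue-noise bound on `K_S`: for a binary sampling pattern `s` with support `S`,
`m` ones and nonempty complement, `K_S ≥ m(1-m/N)²/R_s - γ`, where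
`K_S = min_{v∈Sᶜ} w_S(v)`, `γ = max_{v'∈Sᶜ} ∑_{v∈Sᶜ\{v'}} w_S(v)`,
`w_S(v) = ∑_{u∈S} W(u,v)`, and `R_s = (1/m) ∑_{ℓ≥2} ŝ(ℓ)²/μ_ℓ`. -/
theorem stmt_10 {N : ℕ} (hN : 2 ≤ N)
    (W : Matrix (Fin N) (Fin N) ℝ)
    (hWsymm : W.IsSymm)
    (hWnonneg : ∀ u v, 0 ≤ W u v)
    (hWdiag : ∀ u, W u u = 0)
    (L : Matrix (Fin N) (Fin N) ℝ)
    (hL : L = Matrix.diagonal (fun u => ∑ v, W u v) - W)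
    (μ : Fin N → ℝ) (U : Matrix (Fin N) (Fin N) ℝ)
    (hU : Uᵀ * U = 1)
    (hμmono : Monotone μ)
    (hμ0 : μ (⟨0, by omega⟩ : Fin N) = 0)
    (hμ2 : 0 < μ (⟨1, by omega⟩ : Fin N))
    (hU0 : ∀ i, U i (⟨0, by omega⟩ : Fin N) = 1 / Real.sqrt N)
    (heig : ∀ ℓ, L.mulVec (fun i => U i ℓ) = μ ℓ • (fun i => U i ℓ))
    (S : Finset (Fin N)) (s : Fin N → ℝ)
    (hs : ∀ v, s v = if v ∈ S then 1 else 0)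
    (m : ℕ) (hm : m = S.card) (hm0 : 0 < m) (hmN : m < N)
    (hSc : Sᶜ.Nonempty) :
    Sᶜ.inf' hSc (fun v => ∑ u ∈ S, W u v) ≥
      (m : ℝ) * (1 - (m : ℝ) / N) ^ 2 /
        ((1 / (m : ℝ)) *
          ∑ ℓ ∈ Finset.univ.erase (⟨0, by omega⟩ : Fin N), ((Uᵀ.mulVec s) ℓ) ^ 2 / μ ℓ) -
      Sᶜ.sup' hSc (fun v' => ∑ v ∈ Sᶜ.erase v', ∑ u ∈ S, W u v) := by
  have hN0 : (0:ℝ) < N := by positivity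
  set ℓ₀ : Fin N := ⟨0, by omega⟩ with hℓ₀def
  set sh : Fin N → ℝ := Uᵀ.mulVec s with hshdef
  set E : Finset (Fin N) := Finset.univ.erase ℓ₀ with hEdef
  set T : ℝ := ∑ ℓ ∈ E, sh ℓ ^ 2 / μ ℓ with hTdef
  have hUU : U * Uᵀ = 1 := mul_eq_one_comm.mpr hU
  have hm0' : (0:ℝ) < m := by exact_mod_cast hm0
  -- ‖s‖² = m
  have hss : s ⬝ᵥ s = (m : ℝ) := by
    simp only [dotProduct, hs, ite_mul, one_mul, zero_mul]
    simp [Finset.sum_ite_mem, hm]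
  -- ‖ŝ‖² = ‖s‖²
  have hshn : sh ⬝ᵥ sh = s ⬝ᵥ s := by
    calc sh ⬝ᵥ sh = (s ᵥ* U) ⬝ᵥ (Uᵀ *ᵥ s) := by rw [hshdef, Matrix.mulVec_transpose]
    _ = s ⬝ᵥ (U *ᵥ (Uᵀ *ᵥ s)) := (Matrix.dotProduct_mulVec _ _ _).symm
    _ = s ⬝ᵥ s := by rw [Matrix.mulVec_mulVec, hUU, Matrix.one_mulVec]
  -- ŝ(0) = m / √N
  have hsh0 : sh ℓ₀ = m / Real.sqrt N := by
    rw [hshdef]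
    simp only [Matrix.mulVec, dotProduct, Matrix.transpose_apply, hU0, hs, mul_ite,
      mul_one, mul_zero]
    simp [Finset.sum_ite_mem, hm, div_eq_mul_inv, mul_comm]
  have hsh0sq : sh ℓ₀ ^ 2 = (m:ℝ)^2 / N := by
    rw [hsh0, div_pow, Real.sq_sqrt hN0.le]
  -- spectral decomposition
  have hLU : L * U = U * Matrix.diagonal μ := by
    ext i ℓ
    have h := congrFun (heig ℓ) i
    simp only [Matrix.mulVec, dotProduct, Pi.smul_apply, smul_eq_mul] at h
    rw [Matrix.mul_diagonal, Matrix.mul_apply, h, mul_comm]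
  have hLs : L = U * Matrix.diagonal μ * Uᵀ := by
    calc L = L * (U * Uᵀ) := by rw [hUU, Matrix.mul_one]
    _ = (L * U) * Uᵀ := by rw [Matrix.mul_assoc]
    _ = U * Matrix.diagonal μ * Uᵀ := by rw [hLU]
  -- quadratic form, spectral side
  have hQ : s ⬝ᵥ L *ᵥ s = ∑ ℓ, μ ℓ * sh ℓ ^ 2 := by
    calc s ⬝ᵥ L *ᵥ s = s ⬝ᵥ (U *ᵥ (Matrix.diagonal μ *ᵥ (Uᵀ *ᵥ s))) := by
          rw [hLs, ← Matrix.mulVec_mulVec, ← Matrix.mulVec_mulVec]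
    _ = (s ᵥ* U) ⬝ᵥ (Matrix.diagonal μ *ᵥ sh) := by rw [Matrix.dotProduct_mulVec, hshdef]
    _ = sh ⬝ᵥ (Matrix.diagonal μ *ᵥ sh) := by rw [← Matrix.mulVec_transpose, hshdef]
    _ = ∑ ℓ, μ ℓ * sh ℓ ^ 2 := by
          simp only [dotProduct, Matrix.mulVec_diagonal]
          exact Finset.sum_congr rfl fun ℓ _ => by ring
  -- quadratic form, combinatorial side
  have hQ2 : s ⬝ᵥ L *ᵥ s = ∑ v ∈ Sᶜ, ∑ u ∈ S, W u v := by
    have hA : s ⬝ᵥ (Matrix.diagonal (fun u => ∑ v, W u v)) *ᵥ s = ∑ u ∈ S, ∑ v, W u v := by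
      simp only [dotProduct, Matrix.mulVec_diagonal, hs, ite_mul, mul_ite, one_mul,
        mul_one, zero_mul, mul_zero]
      simp [Finset.sum_ite_mem]
    have hB : s ⬝ᵥ W *ᵥ s = ∑ u ∈ S, ∑ v ∈ S, W u v := by
      simp only [dotProduct, Matrix.mulVec, hs, ite_mul, mul_ite, one_mul,
        mul_one, zero_mul, mul_zero]
      simp [Finset.sum_ite_mem]
    rw [hL, Matrix.sub_mulVec, dotProduct_sub, hA, hB, ← Finset.sum_sub_distrib]
    rw [Finset.sum_congr rfl (fun u _ => ?_), Finset.sum_comm]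
    rfl
    rw [← Finset.sum_add_sum_compl S (fun v => W u v)]
    ring
  -- split the combinatorial sum at the minimizer
  obtain ⟨v₀, hv₀mem, hv₀⟩ := Finset.exists_mem_eq_inf' hSc (fun v => ∑ u ∈ S, W u v)
  have hsplit : ∑ v ∈ Sᶜ, ∑ u ∈ S, W u v
      = (∑ u ∈ S, W u v₀) + ∑ v ∈ Sᶜ.erase v₀, ∑ u ∈ S, W u v :=
    (Finset.add_sum_erase _ _ hv₀mem).symm
  have hγ : ∑ v ∈ Sᶜ.erase v₀, ∑ u ∈ S, W u v
      ≤ Sᶜ.sup' hSc (fun v' => ∑ v ∈ Sᶜ.erase v', ∑ u ∈ S, W u v) :=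
    Finset.le_sup' (fun v' => ∑ v ∈ Sᶜ.erase v', ∑ u ∈ S, W u v) hv₀mem
  -- positivity of eigenvalues off 0
  have hμnn : ∀ ℓ, 0 ≤ μ ℓ := by
    intro ℓ
    have : ℓ₀ ≤ ℓ := by rw [Fin.le_def]; exact Nat.zero_le _
    rw [← hμ0]
    exact hμmono this
  have hμpos : ∀ ℓ ∈ E, 0 < μ ℓ := by
    intro ℓ hℓ
    have hne : ℓ ≠ ℓ₀ := (Finset.mem_erase.mp hℓ).1
    have h1 : (⟨1, by omega⟩ : Fin N) ≤ ℓ := by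
      have hv : (ℓ : ℕ) ≠ 0 := fun h => hne (Fin.ext h)
      rw [Fin.le_def]
      show 1 ≤ (ℓ : ℕ)
      omega
    exact lt_of_lt_of_le hμ2 (hμmono h1)
  -- sums over E
  have hsum_univ : ∀ f : Fin N → ℝ, ∑ ℓ, f ℓ = f ℓ₀ + ∑ ℓ ∈ E, f ℓ := by
    intro f
    exact (Finset.add_sum_erase _ f (Finset.mem_univ ℓ₀)).symm
  have hE1 : ∑ ℓ ∈ E, sh ℓ ^ 2 = (m:ℝ) - (m:ℝ)^2 / N := by
    have h1 : ∑ ℓ, sh ℓ ^ 2 = (m:ℝ) := by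
      have : sh ⬝ᵥ sh = ∑ ℓ, sh ℓ ^ 2 := Finset.sum_congr rfl fun ℓ _ => by ring
      rw [← this, hshn, hss]
    have := hsum_univ (fun ℓ => sh ℓ ^ 2)
    rw [h1, hsh0sq] at this
    linarith
  have hE2 : ∑ ℓ ∈ E, μ ℓ * sh ℓ ^ 2 = s ⬝ᵥ L *ᵥ s := by
    have := hsum_univ (fun ℓ => μ ℓ * sh ℓ ^ 2)
    rw [← hQ] at this
    rw [hμ0] at this
    simp only [zero_mul, zero_add] at this
    exact this.symm
  -- Cauchy–Schwarz
  set P : ℝ := (m:ℝ) - (m:ℝ)^2 / N with hPdef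
  have hPpos : 0 < P := by
    rw [hPdef]
    have : (m:ℝ) < N := by exact_mod_cast hmN
    have h2 : (m:ℝ)^2 / N < m := by
      rw [div_lt_iff₀ hN0]
      nlinarith
    linarith
  have hCS : P ^ 2 ≤ (∑ ℓ ∈ E, μ ℓ * sh ℓ ^ 2) * T := by
    have key := Finset.sum_mul_sq_le_sq_mul_sq E
      (fun ℓ => Real.sqrt (μ ℓ) * sh ℓ) (fun ℓ => sh ℓ / Real.sqrt (μ ℓ))
    have h1 : ∑ ℓ ∈ E, (Real.sqrt (μ ℓ) * sh ℓ) * (sh ℓ / Real.sqrt (μ ℓ)) = P := by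
      rw [← hE1]
      refine Finset.sum_congr rfl fun ℓ hℓ => ?_
      have hsq : Real.sqrt (μ ℓ) ≠ 0 := Real.sqrt_ne_zero'.mpr (hμpos ℓ hℓ)
      field_simp
    have h2 : ∑ ℓ ∈ E, (Real.sqrt (μ ℓ) * sh ℓ) ^ 2 = ∑ ℓ ∈ E, μ ℓ * sh ℓ ^ 2 := by
      refine Finset.sum_congr rfl fun ℓ hℓ => ?_
      rw [mul_pow, Real.sq_sqrt (hμpos ℓ hℓ).le]
    have h3 : ∑ ℓ ∈ E, (sh ℓ / Real.sqrt (μ ℓ)) ^ 2 = T := by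
      rw [hTdef]
      refine Finset.sum_congr rfl fun ℓ hℓ => ?_
      rw [div_pow, Real.sq_sqrt (hμpos ℓ hℓ).le]
    rw [h1, h2, h3] at key
    exact key
  have hQnn : 0 ≤ ∑ ℓ ∈ E, μ ℓ * sh ℓ ^ 2 :=
    Finset.sum_nonneg fun ℓ _ => mul_nonneg (hμnn ℓ) (sq_nonneg _)
  have hTnn : 0 ≤ T :=
    Finset.sum_nonneg fun ℓ hℓ => div_nonneg (sq_nonneg _) (hμpos ℓ hℓ).le
  have hTpos : 0 < T := by
    rcases hTnn.lt_or_eq with h | h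
    · exact h
    · exfalso; rw [← h] at hCS; nlinarith
  have hQge : P ^ 2 / T ≤ ∑ ℓ ∈ E, μ ℓ * sh ℓ ^ 2 := by
    rw [div_le_iff₀ hTpos]
    exact hCS
  -- put it together
  have hfinal : (m:ℝ) * (1 - (m:ℝ)/N)^2 / ((1/(m:ℝ)) * T) = P^2 / T := by
    rw [hPdef]
    have hmne : (m:ℝ) ≠ 0 := ne_of_gt hm0'
    have hNne : (N:ℝ) ≠ 0 := ne_of_gt hN0
    field_simp
  rw [hv₀, hfinal]
  have : ∑ ℓ ∈ E, μ ℓ * sh ℓ ^ 2 = (∑ u ∈ S, W u v₀) + ∑ v ∈ Sᶜ.erase v₀, ∑ u ∈ S, W u v := by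
    rw [hE2, hQ2, hsplit]
  linarith
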